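/- Let D > 0 and c ∈ ℝ. There exists a constant β > 0 such that for every λ ∈ ℂ with Re λ ≥ −1/2 and |Im λ| ≤ 1/2 and every k ∈ ℤ, the spatial eigenvalues μ₊(λ,k) := (−c + √(c² + 4D(1+λ+ik)))/(2D) and μ₋(λ,k) := (−c − √(c² + 4D(1+λ+ik)))/(2D), defined with the principal branch of the complex square root (which is well defined since Re(c² + 4D(1+λ+ik)) ≥ c² + 2D > 0), satisfy Re μ₊(λ,k) ≥ β√(1+|k|) and Re μ₋(λ,k) ≤ −β√(1+|k|). -/

import Mathlib

set_option maxHeartbeats 1600000 in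
/-- Uniform lower bound on the real parts of the spatial eigenvalues
`μ±(λ,k) = (−c ± √(c² + 4D(1+λ+ik)))/(2D)` for `Re λ ≥ −1/2`, `|Im λ| ≤ 1/2`. -/
theorem stmt0 (D c : ℝ) (hD : 0 < D) :
    ∃ β : ℝ, 0 < β ∧ ∀ lam : ℂ, (-1/2 : ℝ) ≤ lam.re → |lam.im| ≤ 1/2 →
      ∀ k : ℤ,
        β * Real.sqrt (1 + |(k : ℝ)|) ≤
          (((-(c:ℂ) + ((c:ℂ)^2 + 4*(D:ℂ)*(1 + lam + Complex.I * (k:ℂ))) ^ ((1:ℂ)/2)) /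
            (2*(D:ℂ))).re) ∧
        (((-(c:ℂ) - ((c:ℂ)^2 + 4*(D:ℂ)*(1 + lam + Complex.I * (k:ℂ))) ^ ((1:ℂ)/2)) /
            (2*(D:ℂ))).re) ≤ -(β * Real.sqrt (1 + |(k : ℝ)|)) := by
  set S : ℝ := Real.sqrt (c^2 + 2*D) with hSdef
  have hS2 : S^2 = c^2 + 2*D := Real.sq_sqrt (by positivity)
  have hSpos : 0 < S := Real.sqrt_pos.2 (by positivity)
  have hcS : |c| < S := by nlinarith [abs_nonneg c, sq_abs c]
  set ε : ℝ := 1 - |c| / S with hεdef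
  have hεpos : 0 < ε := by
    rw [hεdef, sub_pos, div_lt_one hSpos]; exact hcS
  refine ⟨ε * Real.sqrt D / (2*D), by positivity, ?_⟩
  intro lam hre him k
  set w : ℂ := (c:ℂ)^2 + 4*(D:ℂ)*(1 + lam + Complex.I * (k:ℂ)) with hw
  have hwre : w.re = c^2 + 4*D*(1 + lam.re) := by
    simp [hw, pow_two, Complex.add_re, Complex.mul_re, Complex.mul_im]
  have hwim : w.im = 4*D*(lam.im + k) := by
    simp [hw, pow_two, Complex.add_im, Complex.mul_im, Complex.mul_re]
  have hwrepos : 0 < w.re := by rw [hwre]; nlinarith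
  have hwne : w ≠ 0 := by
    intro h; rw [h] at hwrepos; simp at hwrepos
  set v : ℂ := w ^ ((1:ℂ)/2) with hv
  have hv2 : v^2 = w := by
    rw [hv, one_div]
    have : ((2:ℂ)⁻¹) = (((2:ℕ):ℂ)⁻¹) := by norm_num
    rw [this, Complex.cpow_nat_inv_pow w (by norm_num)]
  set a : ℝ := v.re with ha
  set b : ℝ := v.im with hb
  have hapos : 0 < a := by
    rw [ha, hv, Complex.cpow_def_of_ne_zero hwne, Complex.exp_re]
    apply mul_pos (Real.exp_pos _)
    apply Real.cos_pos_of_mem_Ioo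
    have harg : |Complex.arg w| < Real.pi / 2 :=
      Complex.abs_arg_lt_pi_div_two_iff.2 (Or.inl hwrepos)
    have him2 : (Complex.log w * ((1:ℂ)/2)).im = Complex.arg w * (1/2) := by
      simp [Complex.mul_im, Complex.log_im, Complex.log_re]
    rw [him2]
    rw [abs_lt] at harg
    constructor <;> nlinarith [Real.pi_pos]
  have h1 : a*a - b*b = w.re := by
    have := congrArg Complex.re hv2
    rwa [sq, Complex.mul_re] at this
  have h2 : a*a + b*b = ‖w‖ := by
    have h3 : ‖v‖ ^ 2 = ‖w‖ := by rw [← norm_pow, hv2]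
    rw [Complex.sq_norm, Complex.normSq_apply] at h3
    exact h3
  have habs_re : w.re ≤ ‖w‖ := Complex.re_le_norm w
  have habs_im : |w.im| ≤ ‖w‖ := Complex.abs_im_le_norm w
  clear_value a b v
  -- bound 1 : a^2 ≥ c^2 + 2D
  have hb1 : c^2 + 2*D ≤ a^2 := by
    have : c^2 + 2*D ≤ w.re := by rw [hwre]; nlinarith
    nlinarith
  -- bound 2 : a^2 ≥ 2D|k| + c^2/2
  have hkim : |(k:ℝ)| - 1/2 ≤ |lam.im + (k:ℝ)| := by
    have h4 : |(k:ℝ)| ≤ |lam.im + (k:ℝ)| + |lam.im| := by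
      calc |(k:ℝ)| = |(lam.im + k) + (-lam.im)| := by ring_nf
        _ ≤ |lam.im + (k:ℝ)| + |(-lam.im)| := abs_add_le _ _
        _ = |lam.im + (k:ℝ)| + |lam.im| := by rw [abs_neg]
    linarith
  have hb2 : 2*D*|(k:ℝ)| + c^2/2 ≤ a^2 := by
    have himw : 4*D*(|(k:ℝ)| - 1/2) ≤ |w.im| := by
      rw [hwim, abs_mul]
      have : |(4:ℝ)*D| = 4*D := abs_of_pos (by linarith)
      rw [this]
      nlinarith [hkim]
    have hrew : c^2 + 2*D ≤ w.re := by rw [hwre]; nlinarith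
    nlinarith
  have hb3 : D * (1 + |(k:ℝ)|) ≤ a^2 := by nlinarith [sq_nonneg c]
  have hak : Real.sqrt D * Real.sqrt (1 + |(k:ℝ)|) ≤ a := by
    rw [← Real.sqrt_mul hD.le]
    calc Real.sqrt (D * (1 + |(k:ℝ)|)) ≤ Real.sqrt (a^2) := Real.sqrt_le_sqrt hb3
      _ = a := Real.sqrt_sq hapos.le
  have haS : S ≤ a := by
    rw [hSdef]
    calc Real.sqrt (c^2 + 2*D) ≤ Real.sqrt (a^2) := Real.sqrt_le_sqrt hb1
      _ = a := Real.sqrt_sq hapos.le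
  have hkey : ε * a ≤ a - |c| := by
    rw [hεdef, sub_mul, one_mul]
    have h5 : |c| * S ≤ |c| * a := mul_le_mul_of_nonneg_left haS (abs_nonneg c)
    have h6 : |c| ≤ |c| / S * a := by
      rw [div_mul_eq_mul_div, le_div_iff₀ hSpos]; linarith
    linarith
  have hchain : ε * Real.sqrt D * Real.sqrt (1 + |(k:ℝ)|) ≤ a - |c| := by
    calc ε * Real.sqrt D * Real.sqrt (1 + |(k:ℝ)|)
        = ε * (Real.sqrt D * Real.sqrt (1 + |(k:ℝ)|)) := by ring
      _ ≤ ε * a := mul_le_mul_of_nonneg_left hak hεpos.le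
      _ ≤ a - |c| := hkey
  have habs_c : -|c| ≤ c ∧ c ≤ |c| := ⟨neg_abs_le c, le_abs_self c⟩
  have h2D : (2*(D:ℂ)) = ((2*D : ℝ):ℂ) := by push_cast; ring
  constructor
  · have hre1 : ((-(c:ℂ) + v) / (2*(D:ℂ))).re = (-c + a) / (2*D) := by
      rw [h2D, Complex.div_ofReal_re]
      simp [Complex.add_re, ha]
    rw [hre1]
    rw [div_mul_eq_mul_div, div_le_div_iff₀ (by linarith) (by linarith)]
    have h7 : 0 ≤ Real.sqrt (1 + |(k:ℝ)|) := Real.sqrt_nonneg _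
    nlinarith [hchain, habs_c.2]
  · have hre2 : ((-(c:ℂ) - v) / (2*(D:ℂ))).re = (-c - a) / (2*D) := by
      rw [h2D, Complex.div_ofReal_re]
      simp [Complex.sub_re, ha]
    rw [hre2]
    rw [le_neg, ← neg_div, div_mul_eq_mul_div, div_le_div_iff₀ (by linarith) (by linarith)]
    have h7 : 0 ≤ Real.sqrt (1 + |(k:ℝ)|) := Real.sqrt_nonneg _
    nlinarith [hchain, habs_c.1]
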